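/- Let H ⊆ F be a dense seminormal C-monoid such that every class of C*(H,F) contains an element of P, with idempotents e₀ = [1], ..., e_n of C*(H,F) satisfying e₀+...+e_n = e_n. If H is half-factorial, then the quotient group C_n*/φ_n(C_{F^×}(H,F)) has at most 2 elements, where C_n* is the constituent group of e_n and φ_n([ε]) = [ε] + e_n for ε ∈ F^×. -/

import Mathlib

/-- The factorial monoid `F = F^× × ℱ(P)`, with unit group `Fu` and free
abelian monoid `ℱ(P)` modeled by `Multiplicative (P →₀ ℕ)`. -/
abbrev FM (Fu P : Type*) [CommGroup Fu] : Type _ := Fu × Multiplicative (P →₀ ℕ)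

/-- `H`-equivalence on `F`: `y ~ y'` iff for all `x ∈ F`, `x*y ∈ H ↔ x*y' ∈ H`. -/
def HRel {M : Type*} [CommMonoid M] (H : Submonoid M) (y y' : M) : Prop :=
  ∀ x : M, x * y ∈ H ↔ x * y' ∈ H

/-- `y ∈ (F \ F^×) ∪ {1}`: the representatives of the reduced class semigroup. -/
def NU1 {M : Type*} [Monoid M] (y : M) : Prop := ¬ IsUnit y ∨ y = 1

/-- The reduced class semigroup `C*(H,F)` is finite: there are finitely many
`H`-equivalence classes of elements of `(F \ F^×) ∪ {1}`. -/
def CStarFinite {M : Type*} [CommMonoid M] (H : Submonoid M) : Prop :=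
  ∃ (n : ℕ) (f : Fin n → M), ∀ y : M, NU1 y → ∃ i : Fin n, HRel H y (f i)

/-- `C*(H,F)` is a union of groups: each class `[y]` lies in some subgroup,
i.e. in the constituent group of some idempotent `[e]`: `[e] + [e] = [e]`,
`[y] + [e] = [y]` and `[y] + [z] = [e]` for some class `[z]`. -/
def CStarUnionOfGroups {M : Type*} [CommMonoid M] (H : Submonoid M) : Prop :=
  ∀ y : M, NU1 y → ∃ e : M, NU1 e ∧ HRel H (e * e) e ∧ HRel H (y * e) y ∧
    ∃ z : M, NU1 z ∧ HRel H (y * z) e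

/-- `H^× = H ∩ F^×`: every element of `H` which is invertible in `F` has its
inverse in `H`. -/
def UnitsCond {M : Type*} [Monoid M] (H : Submonoid M) : Prop :=
  ∀ u : Mˣ, (u : M) ∈ H → ((u⁻¹ : Mˣ) : M) ∈ H

/-- `H` is seminormal: for `x = a/b ∈ q(H)` (`a, b ∈ H`) with `x^n ∈ H` for all
sufficiently large `n` (i.e. `a^n = h_n * b^n` with `h_n ∈ H`), one has `x ∈ H`
(i.e. `a = h * b` with `h ∈ H`). -/
def SeminormalSub {M : Type*} [CommMonoid M] (H : Submonoid M) : Prop :=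
  ∀ a b : M, a ∈ H → b ∈ H → (∃ m : ℕ, ∀ n ≥ m, ∃ h ∈ H, a ^ n = h * b ^ n) →
    ∃ h ∈ H, a = h * b

/-- The prime element of `F = F^× × ℱ(P)` corresponding to `p ∈ P`. -/
noncomputable def primeElt {Fu P : Type*} [CommGroup Fu] (p : P) : FM Fu P :=
  (1, Multiplicative.ofAdd (Finsupp.single p 1))

/-- `H` is dense in `F`: for every prime `p`, the set `v_p(H) ⊆ ℕ₀` is a
numerical monoid, i.e. has finite complement in `ℕ₀`. -/
def DenseSub {Fu P : Type*} [CommGroup Fu] (H : Submonoid (FM Fu P)) : Prop :=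
  ∀ p : P, {k : ℕ | ∀ a ∈ H, Multiplicative.toAdd a.2 p ≠ k}.Finite

/-- `a` is an atom (irreducible element) of `H`. -/
def AtomOf {M : Type*} [CommMonoid M] (H : Submonoid M) (a : M) : Prop :=
  a ∈ H ∧ ¬ IsUnit a ∧
    ∀ v w : M, v ∈ H → w ∈ H → a = v * w → IsUnit v ∨ IsUnit w

/-- `H` is half-factorial: it is atomic and any two factorizations of an
element of `H` into atoms have the same length. -/
def HalfFactorialSub {M : Type*} [CommMonoid M] (H : Submonoid M) : Prop :=
  (∀ a ∈ H, ¬ IsUnit a → ∃ l : List M, (∀ x ∈ l, AtomOf H x) ∧ a = l.prod) ∧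
    ∀ l l' : List M, (∀ x ∈ l, AtomOf H x) → (∀ x ∈ l', AtomOf H x) →
      l.prod = l'.prod → l.length = l'.length

namespace Stmt17Aux

section rel
variable {M : Type*} [CommMonoid M] (H : Submonoid M)

theorem rrefl (y : M) : HRel H y y := fun _ => Iff.rfl

theorem rsymm {y y' : M} (h : HRel H y y') : HRel H y' y := fun x => (h x).symm

theorem rtrans {y₁ y₂ y₃ : M} (h1 : HRel H y₁ y₂) (h2 : HRel H y₂ y₃) : HRel H y₁ y₃ :=
  fun x => (h1 x).trans (h2 x)

theorem rmul_left (c : M) {y y' : M} (h : HRel H y y') : HRel H (c * y) (c * y') := by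
  intro x
  have := h (x * c)
  simpa [mul_assoc] using this

theorem rmul {y y' z z' : M} (h1 : HRel H y y') (h2 : HRel H z z') :
    HRel H (y * z) (y' * z') := by
  refine rtrans H (rmul_left H y h2) ?_
  rw [mul_comm y z', mul_comm y' z']
  exact rmul_left H z' h1

theorem rpow {y y' : M} (h : HRel H y y') (n : ℕ) : HRel H (y ^ n) (y' ^ n) := by
  induction n with
  | zero => rw [pow_zero, pow_zero]; exact rrefl H 1
  | succ n ih => rw [pow_succ, pow_succ]; exact rmul H ih h

theorem rmem {y y' : M} (h : HRel H y y') : y ∈ H ↔ y' ∈ H := by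
  have := h 1
  simpa using this

theorem nu1_one : NU1 (1 : M) := Or.inr rfl

theorem nu1_mul {a c : M} (ha : NU1 a) (hc : NU1 c) : NU1 (a * c) := by
  rcases ha with ha | rfl
  · rcases hc with hc | rfl
    · exact Or.inl fun h => ha (isUnit_of_mul_isUnit_left h)
    · rw [mul_one]; exact Or.inl ha
  · simpa using hc

theorem nu1_pow {a : M} (ha : NU1 a) (n : ℕ) : NU1 (a ^ n) := by
  induction n with
  | zero => rw [pow_zero]; exact nu1_one
  | succ n ih => rw [pow_succ]; exact nu1_mul ih ha

/-- Pigeonhole: some power class is idempotent. -/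
theorem exists_idem_pow (hfin : CStarFinite H) {y : M} (hy : NU1 y) :
    ∃ N, 1 ≤ N ∧ HRel H (y ^ N) (y ^ (2 * N)) := by
  classical
  obtain ⟨n, f, hf⟩ := hfin
  choose g hg using fun j : Fin (n + 1) => hf (y ^ ((j : ℕ) + 1)) (nu1_pow hy _)
  obtain ⟨i, j, hij, hgij⟩ := Fintype.exists_ne_map_eq_of_card_lt g (by simp)
  -- wlog i < j
  have key : ∀ (i j : Fin (n+1)), (i:ℕ) < (j:ℕ) → g i = g j →
      ∃ N, 1 ≤ N ∧ HRel H (y ^ N) (y ^ (2 * N)) := by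
    intro i j hlt heq
    set a := (i : ℕ) + 1 with ha
    set e := (j : ℕ) - (i : ℕ) with he
    have he1 : 1 ≤ e := by omega
    have hkey : HRel H (y ^ a) (y ^ (a + e)) := by
      have h1 : HRel H (y ^ a) (f (g i)) := hg i
      have h2 : HRel H (y ^ ((j:ℕ)+1)) (f (g j)) := hg j
      rw [heq] at h1
      have : a + e = (j : ℕ) + 1 := by omega
      rw [this]
      exact rtrans H h1 (rsymm H h2)
    -- chain: ∀ t, HRel (y^a) (y^(a+t*e))
    have chain : ∀ t, HRel H (y ^ a) (y ^ (a + t * e)) := by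
      intro t
      induction t with
      | zero => simpa using rrefl H (y ^ a)
      | succ t ih =>
        refine rtrans H ih ?_
        have : HRel H (y ^ (a + t*e)) (y ^ (a + e + t*e)) := by
          have := rmul_left H (y ^ (t*e)) hkey
          rw [← pow_add, ← pow_add] at this
          have e1 : t*e + a = a + t*e := by ring
          have e2 : t*e + (a+e) = a + e + t*e := by ring
          rwa [e1, e2] at this
        have e3 : a + e + t*e = a + (t+1)*e := by ring
        rwa [e3] at this
    refine ⟨a * e, Nat.mul_pos (by omega) (by omega), ?_⟩
    have := rmul_left H (y ^ (a*e - a)) (chain a)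
    rw [← pow_add, ← pow_add] at this
    have e1 : a*e - a + a = a*e := by
      have : a ≤ a*e := Nat.le_mul_of_pos_right a (by omega)
      omega
    have e2 : a*e - a + (a + a*e) = 2*(a*e) := by
      have : a ≤ a*e := Nat.le_mul_of_pos_right a (by omega)
      omega
    rwa [e1, e2] at this
  rcases Ne.lt_or_gt (fun h : (i:ℕ) = (j:ℕ) => hij (Fin.ext h)) with h | h
  · exact key i j h hgij
  · exact key j i h hgij.symm

end rel
section bsec
variable {M : Type*} [CommMonoid M] (H : Submonoid M) (b : M)

/-- powers of b are related to b -/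
theorem bpow (hbid : HRel H (b * b) b) : ∀ n, 1 ≤ n → HRel H (b ^ n) b := by
  intro n hn
  induction n with
  | zero => omega
  | succ n ih =>
    rcases Nat.eq_or_lt_of_le hn with h | h
    · rw [← h]; simpa using rrefl H b
    · have h1 : 1 ≤ n := by omega
      rw [pow_succ]
      exact rtrans H (rmul H (ih h1) (rrefl H b)) hbid

/-- absorbed powers: if z*b ~ z then z^n*b ~ z^n for n ≥ 1 -/
theorem abs_pow {z : M} (hab : HRel H (z * b) z) : ∀ n, 1 ≤ n → HRel H (z ^ n * b) (z ^ n) := by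
  intro n hn
  induction n with
  | zero => omega
  | succ n ih =>
    rcases Nat.eq_or_lt_of_le hn with h | h
    · rw [← h]; simpa using hab
    · have h1 : 1 ≤ n := by omega
      have e0 : z ^ (n+1) * b = z * (z ^ n * b) := by rw [pow_succ', mul_assoc]
      rw [e0, pow_succ']
      exact rtrans H (rmul_left H z (ih h1)) (rrefl H _)

/-- core: invertible absorbed elements have a power related to b -/
theorem pow_rel_b (hfin : CStarFinite H) (hbid : HRel H (b * b) b)
    {z z' : M} (hz : NU1 z) (hab : HRel H (z * b) z) (hinv : HRel H (z * z') b) :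
    ∃ N, 1 ≤ N ∧ HRel H (z ^ N) b := by
  obtain ⟨N, hN1, hN⟩ := exists_idem_pow H hfin hz
  refine ⟨N, hN1, ?_⟩
  have hzz' : HRel H (z ^ N * z' ^ N) b := by
    have h1 : HRel H ((z * z') ^ N) (b ^ N) := rpow H hinv N
    rw [mul_pow] at h1
    exact rtrans H h1 (bpow H b hbid N hN1)
  -- z^N ~ z^N*b ~ z^N*(z^N*z'^N) = z^(2N)*z'^N ~ z^N*z'^N ~ b
  refine rtrans H (rsymm H (abs_pow H b hab N hN1)) ?_
  refine rtrans H (rmul_left H (z ^ N) (rsymm H hzz')) ?_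
  have e1 : z ^ N * (z ^ N * z' ^ N) = z ^ (2*N) * z' ^ N := by
    rw [two_mul, pow_add, mul_assoc]
  rw [e1]
  refine rtrans H (rmul H (rsymm H hN) (rrefl H (z' ^ N))) ?_
  exact hzz'

/-- Lemma S: an element of H which is absorbed and invertible is related to b. -/
theorem mem_rel_b (hfin : CStarFinite H) (hbid : HRel H (b * b) b)
    {z z' : M} (hzH : z ∈ H) (hz : NU1 z) (hab : HRel H (z * b) z)
    (hinv : HRel H (z * z') b) : HRel H z b := by
  obtain ⟨N, hN1, hN⟩ := pow_rel_b H b hfin hbid hz hab hinv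
  intro x
  constructor
  · intro hx
    -- x*z ∈ H → x*z^N ∈ H → x*b ∈ H
    have h1 : x * z * z ^ (N-1) ∈ H := H.mul_mem hx (H.pow_mem hzH _)
    have e1 : x * z * z ^ (N-1) = x * z ^ N := by
      rw [mul_assoc, ← pow_succ']
      congr 2
      omega
    rw [e1] at h1
    exact (hN x).mp h1
  · intro hx
    -- x*b ∈ H → x*z^N ∈ H → x*z^(N+1) ∈ H → x*z ∈ H
    have h1 : x * z ^ N ∈ H := (hN x).mpr hx
    have h2 : x * z ^ N * z ∈ H := H.mul_mem h1 hzH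
    have e1 : x * z ^ N * z = x * z ^ (N+1) := by rw [mul_assoc, ← pow_succ]
    rw [e1] at h2
    have h3 : HRel H (z ^ (N+1)) z := by
      rw [pow_succ]
      refine rtrans H (rmul H hN (rrefl H z)) ?_
      rw [mul_comm b z]
      exact hab
    exact (rmem H (rmul_left H x h3)).mp h2

end bsec
section osec
variable {M : Type*} [CommMonoid M] (H : Submonoid M) (b : M)

/-- `Qp X j` : the class of `X^j` is the class of a unit times `b`. -/
def Qp (X : M) (j : ℕ) : Prop := ∃ ε : Mˣ, HRel H (X ^ j) ((ε : M) * b)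

theorem runit_cancel (ε : Mˣ) {x y : M} (h : HRel H ((ε : M) * x) y) :
    HRel H x ((ε⁻¹ : Mˣ) * y) := by
  have h1 := rmul_left H ((ε⁻¹ : Mˣ) : M) h
  have e1 : ((ε⁻¹ : Mˣ) : M) * ((ε : M) * x) = x := by
    rw [← mul_assoc, Units.inv_mul, one_mul]
  rwa [e1] at h1

theorem Qsym (hbid : HRel H (b * b) b) {X X' : M} (habX : HRel H (X * b) X)
    (hinv : HRel H (X * X') b) {j : ℕ} (hj : 1 ≤ j) (hQ : Qp H b X' j) :
    Qp H b X j := by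
  obtain ⟨ε, hε⟩ := hQ
  have hXX' : HRel H (X ^ j * X' ^ j) b := by
    have := rpow H hinv j
    rw [mul_pow] at this
    exact rtrans H this (bpow H b hbid j hj)
  have h1 : HRel H (X ^ j * ((ε : M) * b)) b :=
    rtrans H (rmul_left H (X ^ j) (rsymm H hε)) hXX'
  have e1 : X ^ j * ((ε : M) * b) = (ε : M) * (X ^ j * b) := by
    rw [mul_left_comm]
  rw [e1] at h1
  have h2 := runit_cancel H ε h1
  refine ⟨ε⁻¹, ?_⟩
  exact rtrans H (rsymm H (abs_pow H b habX j hj)) h2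

theorem exists_ord (hfin : CStarFinite H) (hbid : HRel H (b * b) b)
    {X X' : M} (hX : NU1 X) (habX : HRel H (X * b) X) (hinv : HRel H (X * X') b) :
    ∃ d, 1 ≤ d ∧ Qp H b X d ∧ ∀ i, 1 ≤ i → Qp H b X i → d ∣ i := by
  classical
  have hex : ∃ j, 1 ≤ j ∧ Qp H b X j := by
    obtain ⟨N, hN1, hN⟩ := pow_rel_b H b hfin hbid hX habX hinv
    exact ⟨N, hN1, 1, by simpa using hN⟩
  refine ⟨Nat.find hex, (Nat.find_spec hex).1, (Nat.find_spec hex).2, ?_⟩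
  set d := Nat.find hex with hd
  intro i
  induction i using Nat.strong_induction_on with
  | _ i ih =>
    intro hi1 hQi
    rcases lt_trichotomy i d with h | h | h
    · exact absurd ⟨hi1, hQi⟩ (Nat.find_min hex h)
    · rw [h]
    · obtain ⟨ε, hε⟩ := hQi
      obtain ⟨δ, hδ⟩ := (Nat.find_spec hex).2
      have hd1 : 1 ≤ d := (Nat.find_spec hex).1
      have key : Qp H b X (i - d) := by
        have h1 : HRel H (X ^ (i-d) * ((δ : M) * b)) ((ε : M) * b) := by
          refine rtrans H (rmul_left H (X ^ (i-d)) (rsymm H hδ)) ?_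
          rw [← pow_add]
          have e : i - d + d = i := by omega
          rw [e]
          exact hε
        have e1 : X ^ (i-d) * ((δ : M) * b) = (δ : M) * (X ^ (i-d) * b) := by
          rw [mul_left_comm]
        rw [e1] at h1
        have h2 := runit_cancel H δ h1
        refine ⟨δ⁻¹ * ε, ?_⟩
        have e2 : ((δ⁻¹ * ε : Mˣ) : M) * b = ((δ⁻¹ : Mˣ) : M) * ((ε : M) * b) := by
          rw [Units.val_mul, mul_assoc]
        rw [e2]
        exact rtrans H (rsymm H (abs_pow H b habX (i-d) (by omega))) h2
      have hdvd := ih (i - d) (by omega) (by omega) key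
      have : d ∣ (i - d) + d := dvd_add hdvd dvd_rfl
      rwa [Nat.sub_add_cancel (by omega)] at this

end osec
section fmsec
variable {Fu P : Type*} [CommGroup Fu]

/-- unit of FM from unit part -/
noncomputable def fuUnit (u : Fu) : (FM Fu P)ˣ :=
  ⟨(u, 1), (u⁻¹, 1), by simp [Prod.ext_iff], by simp [Prod.ext_iff]⟩

theorem fuUnit_coe (u : Fu) : ((fuUnit u : (FM Fu P)ˣ) : FM Fu P) = (u, 1) := rfl

theorem mult_unit_eq_one {x : Multiplicative (P →₀ ℕ)} (h : IsUnit x) : x = 1 := by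
  obtain ⟨u, rfl⟩ := h
  have h1 : (u : Multiplicative (P →₀ ℕ)) * ↑u⁻¹ = 1 := u.mul_inv
  have h2 : Multiplicative.toAdd (u : Multiplicative (P →₀ ℕ)) +
      Multiplicative.toAdd (↑u⁻¹ : Multiplicative (P →₀ ℕ)) = 0 := by
    rw [← toAdd_mul, h1]; rfl
  have h3 : Multiplicative.toAdd (u : Multiplicative (P →₀ ℕ)) = 0 := by
    ext p
    have := DFunLike.congr_fun h2 p
    simp only [Finsupp.add_apply, Finsupp.coe_zero, Pi.zero_apply] at this ⊢
    omega
  have h4 : (u : Multiplicative (P →₀ ℕ)) = Multiplicative.ofAdd 0 := by rw [← h3]; rfl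
  simpa using h4

theorem isUnit_iff_fm (v : FM Fu P) : IsUnit v ↔ v.2 = 1 := by
  constructor
  · intro h
    exact mult_unit_eq_one (h.map (MonoidHom.snd Fu (Multiplicative (P →₀ ℕ))))
  · intro h
    refine ⟨fuUnit v.1, ?_⟩
    rw [fuUnit_coe]
    exact Prod.ext rfl h.symm

theorem unit_snd (ε : (FM Fu P)ˣ) : ((ε : FM Fu P)).2 = 1 :=
  (isUnit_iff_fm _).mp ε.isUnit

theorem pe_pow (a : P) (n : ℕ) :
    (primeElt a : FM Fu P) ^ n = (1, Multiplicative.ofAdd (Finsupp.single a n)) := by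
  refine Prod.ext ?_ ?_
  · show (1:Fu) ^ n = 1
    exact one_pow n
  · show (Multiplicative.ofAdd (Finsupp.single a 1)) ^ n = _
    rw [← ofAdd_nsmul]
    simp [Finsupp.smul_single]

theorem fm_snd_pow (v : FM Fu P) (n : ℕ) : (v ^ n).2 = v.2 ^ n := by
  induction n with
  | zero => rfl
  | succ n ih => rw [pow_succ, pow_succ, ← ih]; rfl

theorem nu1_pe (a : P) : NU1 (primeElt a : FM Fu P) := by
  refine Or.inl ?_
  rw [isUnit_iff_fm]
  intro h
  have : Multiplicative.toAdd ((primeElt a : FM Fu P)).2 a = 0 := by rw [h]; rfl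
  simp [primeElt] at this

end fmsec
section fmsec2
variable {Fu P : Type*} [CommGroup Fu]

theorem isUnit_iff_toAdd (v : FM Fu P) : IsUnit v ↔ Multiplicative.toAdd v.2 = 0 := by
  rw [isUnit_iff_fm]
  constructor
  · intro h; rw [h]; rfl
  · intro h
    have h2 : v.2 = Multiplicative.ofAdd 0 := by rw [← h]; simp
    simpa using h2

theorem toAdd_eq_two {a b : P} (hba : b ≠ a) (γ : P →₀ ℕ)
    (h0 : ∀ x, x ≠ a → x ≠ b → γ x = 0) :
    γ = Finsupp.single a (γ a) + Finsupp.single b (γ b) := by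
  ext x
  rw [Finsupp.add_apply]
  by_cases hxa : x = a
  · subst hxa
    rw [Finsupp.single_eq_same, Finsupp.single_eq_of_ne' hba]
    omega
  · by_cases hxb : x = b
    · subst hxb
      rw [Finsupp.single_eq_same, Finsupp.single_eq_of_ne' (fun h => hxa h.symm)]
      omega
    · rw [Finsupp.single_eq_of_ne' (fun h => hxa h.symm),
        Finsupp.single_eq_of_ne' (fun h => hxb h.symm), h0 x hxa hxb]
      omega

theorem toAdd_eq_three {a b c : P} (hba : b ≠ a) (hca : c ≠ a) (hcb : c ≠ b) (γ : P →₀ ℕ)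
    (h0 : ∀ x, x ≠ a → x ≠ b → x ≠ c → γ x = 0) :
    γ = Finsupp.single a (γ a) + Finsupp.single b (γ b) + Finsupp.single c (γ c) := by
  ext x
  rw [Finsupp.add_apply, Finsupp.add_apply]
  by_cases hxa : x = a
  · subst hxa
    rw [Finsupp.single_eq_same, Finsupp.single_eq_of_ne' hba, Finsupp.single_eq_of_ne' hca]
    omega
  · by_cases hxb : x = b
    · subst hxb
      rw [Finsupp.single_eq_same, Finsupp.single_eq_of_ne' (fun h => hxa h.symm),
        Finsupp.single_eq_of_ne' hcb]
      omega
    · by_cases hxc : x = c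
      · subst hxc
        rw [Finsupp.single_eq_same, Finsupp.single_eq_of_ne' (fun h => hxa h.symm),
          Finsupp.single_eq_of_ne' (fun h => hxb h.symm)]
        omega
      · rw [Finsupp.single_eq_of_ne' (fun h => hxa h.symm),
          Finsupp.single_eq_of_ne' (fun h => hxb h.symm),
          Finsupp.single_eq_of_ne' (fun h => hxc h.symm), h0 x hxa hxb hxc]
        omega

theorem eq_decomp2 {a b : P} (hba : b ≠ a) (v : FM Fu P)
    (h0 : ∀ x, x ≠ a → x ≠ b → Multiplicative.toAdd v.2 x = 0) :
    v = (v.1, 1) * primeElt a ^ (Multiplicative.toAdd v.2 a) *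
        primeElt b ^ (Multiplicative.toAdd v.2 b) := by
  have hγ := toAdd_eq_two hba (Multiplicative.toAdd v.2) h0
  rw [pe_pow, pe_pow]
  refine Prod.ext ?_ ?_
  · simp
  · simp only [Prod.snd_mul]
    rw [one_mul, ← ofAdd_add, ← hγ]
    simp

theorem eq_decomp3 {a b c : P} (hba : b ≠ a) (hca : c ≠ a) (hcb : c ≠ b) (v : FM Fu P)
    (h0 : ∀ x, x ≠ a → x ≠ b → x ≠ c → Multiplicative.toAdd v.2 x = 0) :
    v = (v.1, 1) * primeElt a ^ (Multiplicative.toAdd v.2 a) *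
        primeElt b ^ (Multiplicative.toAdd v.2 b) *
        primeElt c ^ (Multiplicative.toAdd v.2 c) := by
  have hγ := toAdd_eq_three hba hca hcb (Multiplicative.toAdd v.2) h0
  rw [pe_pow, pe_pow, pe_pow]
  refine Prod.ext ?_ ?_
  · simp
  · simp only [Prod.snd_mul]
    rw [one_mul, ← ofAdd_add, ← ofAdd_add, ← hγ]
    simp

theorem split_pt {v w z : FM Fu P} (h : v * w = z) (x : P) :
    Multiplicative.toAdd v.2 x + Multiplicative.toAdd w.2 x = Multiplicative.toAdd z.2 x := by
  have hsum : Multiplicative.toAdd v.2 + Multiplicative.toAdd w.2 = Multiplicative.toAdd z.2 := by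
    rw [← toAdd_mul]
    exact congrArg Multiplicative.toAdd (congrArg Prod.snd h)
  rw [← hsum]; simp

end fmsec2
section ml2
variable {Fu P : Type*} [CommGroup Fu]

theorem exists_bmem (H : Submonoid (FM Fu P)) (b : FM Fu P)
    (hfin : CStarFinite H) (hdense : DenseSub H)
    (hprimes : ∀ y : FM Fu P, NU1 y → ∃ p : P, HRel H y (primeElt p))
    (hb : NU1 b) (hbid : HRel H (b * b) b)
    (hbmin : ∀ c : FM Fu P, NU1 c → HRel H (c * c) c → HRel H (b * c) b) :
    ∃ w₀ ∈ H, HRel H w₀ b := by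
  obtain ⟨q0, hq⟩ := hprimes b hb
  have hKfin := (hdense q0).union (Set.finite_singleton 0)
  obtain ⟨k, hk⟩ := hKfin.infinite_compl.nonempty
  rw [Set.mem_compl_iff, Set.mem_union] at hk
  push_neg at hk
  obtain ⟨hk1, hk0⟩ := hk
  simp only [Set.mem_setOf_eq] at hk1
  push_neg at hk1
  obtain ⟨a, haH, hak⟩ := hk1
  have hk0' : 1 ≤ k := by
    rcases Nat.eq_zero_or_pos k with h | h
    · exact absurd h hk0
    · exact h
  have hqpow : ∀ j, 1 ≤ j → HRel H ((primeElt q0 : FM Fu P) ^ j) b := by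
    intro j hj
    exact rtrans H (rpow H (rsymm H hq) j) (bpow H b hbid j hj)
  set γ := Multiplicative.toAdd a.2 with hγdef
  set w : FM Fu P := (a.1, Multiplicative.ofAdd (γ.erase q0)) with hwdef
  have ha_eq : a = primeElt q0 ^ k * w := by
    refine Prod.ext ?_ ?_
    · rw [pe_pow]
      show a.1 = 1 * a.1
      rw [one_mul]
    · rw [pe_pow]
      show a.2 = Multiplicative.ofAdd (Finsupp.single q0 k) * Multiplicative.ofAdd (γ.erase q0)
      rw [← ofAdd_add, ← hak, Finsupp.single_add_erase]
      simp [hγdef]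
  by_cases hwu : IsUnit w
  · -- w is a unit: a = δ q^k
    have hw2 : w.2 = 1 := (isUnit_iff_fm w).mp hwu
    have hw_eq : w = (a.1, 1) := Prod.ext rfl hw2
    have hpekb : HRel H (primeElt q0 ^ k * b) (primeElt q0 ^ k) :=
      rtrans H (rmul H (hqpow k hk0') (rrefl H b)) (rtrans H hbid (rsymm H (hqpow k hk0')))
    have hNa : NU1 a := by
      refine Or.inl ?_
      rw [isUnit_iff_toAdd]
      intro h
      have : γ q0 = 0 := by rw [hγdef] at *; rw [h]; rfl
      omega
    have haba : HRel H (a * b) a := by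
      rw [ha_eq]
      have e : primeElt q0 ^ k * w * b = w * (primeElt q0 ^ k * b) := by
        rw [mul_comm (primeElt q0 ^ k) w, mul_assoc]
      rw [e]
      refine rtrans H (rmul_left H w hpekb) ?_
      rw [mul_comm]
      exact rrefl H _
    set z' : FM Fu P := (a.1⁻¹, 1) * primeElt q0 with hz'def
    have e2 : a * z' = primeElt q0 ^ (k+1) := by
      rw [ha_eq, hw_eq, hz'def, pe_pow, pe_pow]
      refine Prod.ext ?_ ?_
      · show 1 * a.1 * (a.1⁻¹ * 1) = 1
        simp
      · show Multiplicative.ofAdd (Finsupp.single q0 k) * 1 *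
          (1 * Multiplicative.ofAdd (Finsupp.single q0 1)) = _
        rw [mul_one, one_mul, ← ofAdd_add, ← Finsupp.single_add]
    have hinv : HRel H (a * z') b := by
      rw [e2]
      exact hqpow (k+1) (by omega)
    obtain ⟨N, hN1, hN⟩ := pow_rel_b H b hfin hbid hNa haba hinv
    exact ⟨a ^ N, H.pow_mem haH N, hN⟩
  · -- w is not a unit
    have hNw : NU1 w := Or.inl hwu
    obtain ⟨N, hN1, hN⟩ := exists_idem_pow H hfin hNw
    have hc : HRel H (w ^ N * w ^ N) (w ^ N) := by
      rw [← pow_add]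
      have e : N + N = 2 * N := by omega
      rw [e]
      exact rsymm H hN
    have habs := hbmin (w ^ N) (nu1_pow hNw N) hc
    have haN : HRel H (a ^ N) b := by
      rw [ha_eq, mul_pow, ← pow_mul]
      refine rtrans H (rmul H (hqpow (k*N) (Nat.one_le_iff_ne_zero.mpr (by positivity))) (rrefl H (w ^ N))) ?_
      exact habs
    exact ⟨a ^ N, H.pow_mem haH N, haN⟩

end ml2
section divsec
variable {Fu P : Type*} [CommGroup Fu]

theorem snd_unit_mul (u : Fu) (t : FM Fu P) : (((u, 1) : FM Fu P) * t).2 = t.2 := by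
  show (1 : Multiplicative (P →₀ ℕ)) * t.2 = t.2
  rw [one_mul]

theorem uinv_cancel (u : Fu) : (((u, 1) : FM Fu P) * ((u⁻¹, 1) : FM Fu P)) = 1 := by
  refine Prod.ext ?_ ?_
  · show u * u⁻¹ = 1
    simp
  · show (1 : Multiplicative (P →₀ ℕ)) * 1 = 1
    rw [one_mul]

/-- If a unit times `t` lies in `H` and `t` is in the class of an invertible absorbed
element `Z`, then the class of `Z` is a unit class times `b`. -/
theorem div_unit (H : Submonoid (FM Fu P)) (b : FM Fu P) (hfin : CStarFinite H)
    (hbid : HRel H (b * b) b) {Z Z' t : FM Fu P}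
    (habZ : HRel H (Z * b) Z) (hinvZ : HRel H (Z * Z') b)
    (ht : HRel H t Z) (hNt : ¬ IsUnit t) (u : Fu)
    (hv : (((u, 1) : FM Fu P) * t) ∈ H) :
    ∃ ε : (FM Fu P)ˣ, HRel H Z ((ε : FM Fu P) * b) := by
  set v : FM Fu P := ((u, 1) : FM Fu P) * t with hvdef
  have hNv : ¬ IsUnit v := by
    intro h
    apply hNt
    rw [isUnit_iff_fm] at h ⊢
    rw [hvdef, snd_unit_mul] at h
    exact h
  have habv : HRel H (v * b) v := by
    have e : v * b = ((u, 1) : FM Fu P) * (t * b) := by rw [hvdef, mul_assoc]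
    rw [e]
    exact rmul_left H _ (rtrans H (rmul H ht (rrefl H b)) (rtrans H habZ (rsymm H ht)))
  have hinvv : HRel H (v * (((u⁻¹, 1) : FM Fu P) * Z')) b := by
    have e : v * (((u⁻¹, 1) : FM Fu P) * Z') =
        (((u, 1) : FM Fu P) * ((u⁻¹, 1) : FM Fu P)) * (t * Z') := mul_mul_mul_comm _ _ _ _
    rw [e, uinv_cancel, one_mul]
    exact rtrans H (rmul H ht (rrefl H Z')) hinvZ
  have hvb : HRel H v b := mem_rel_b H b hfin hbid hv (Or.inl hNv) habv hinvv
  have h1 : HRel H (((fuUnit u : (FM Fu P)ˣ) : FM Fu P) * t) b := by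
    rw [fuUnit_coe]
    exact hvb
  have h2 := runit_cancel H (fuUnit u) h1
  exact ⟨(fuUnit u)⁻¹, rtrans H (rsymm H ht) h2⟩

/-- atom criterion for an element supported on two primes -/
theorem atom_of_two (H : Submonoid (FM Fu P)) {pa qa : P} (hne : qa ≠ pa)
    (z : FM Fu P) (A B : ℕ) (hAB : 1 ≤ A + B)
    (hz2 : Multiplicative.toAdd z.2 = Finsupp.single pa A + Finsupp.single qa B)
    (hzH : z ∈ H)
    (hmid : ∀ (u : Fu) (i j : ℕ), i ≤ A → j ≤ B →
      (((u, 1) : FM Fu P) * primeElt pa ^ i * primeElt qa ^ j) ∈ H →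
      ¬(i = 0 ∧ j = 0) → ¬(i = A ∧ j = B) → False) :
    AtomOf H z := by
  have evalp : Multiplicative.toAdd z.2 pa = A := by
    rw [hz2, Finsupp.add_apply, Finsupp.single_eq_same, Finsupp.single_eq_of_ne' hne]
    omega
  have evalq : Multiplicative.toAdd z.2 qa = B := by
    rw [hz2, Finsupp.add_apply, Finsupp.single_eq_same,
      Finsupp.single_eq_of_ne' (fun h => hne h.symm)]
    omega
  refine ⟨hzH, ?_, ?_⟩
  · rw [isUnit_iff_toAdd]
    intro h
    rw [h] at evalp evalq
    simp at evalp evalq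
    omega
  · intro v w hvH hwH heq
    have hpt := fun x => split_pt (heq.symm) x
    have evz : ∀ x, x ≠ pa → x ≠ qa → Multiplicative.toAdd z.2 x = 0 := by
      intro x hxp hxq
      rw [hz2, Finsupp.add_apply, Finsupp.single_eq_of_ne' (fun h => hxp h.symm),
        Finsupp.single_eq_of_ne' (fun h => hxq h.symm)]
      omega
    have h0v : ∀ x, x ≠ pa → x ≠ qa → Multiplicative.toAdd v.2 x = 0 := by
      intro x hxp hxq
      have := hpt x
      rw [evz x hxp hxq] at this
      omega
    have h0w : ∀ x, x ≠ pa → x ≠ qa → Multiplicative.toAdd w.2 x = 0 := by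
      intro x hxp hxq
      have := hpt x
      rw [evz x hxp hxq] at this
      omega
    have hira : Multiplicative.toAdd v.2 pa + Multiplicative.toAdd w.2 pa = A := by
      have := hpt pa
      rwa [evalp] at this
    have hirb : Multiplicative.toAdd v.2 qa + Multiplicative.toAdd w.2 qa = B := by
      have := hpt qa
      rwa [evalq] at this
    have hvdec := eq_decomp2 hne v h0v
    have hwdec := eq_decomp2 hne w h0w
    by_cases hv0 : Multiplicative.toAdd v.2 pa = 0 ∧ Multiplicative.toAdd v.2 qa = 0
    · left
      rw [isUnit_iff_toAdd]
      rw [toAdd_eq_two hne _ h0v, hv0.1, hv0.2]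
      simp
    · by_cases hvA : Multiplicative.toAdd v.2 pa = A ∧ Multiplicative.toAdd v.2 qa = B
      · right
        rw [isUnit_iff_toAdd]
        rw [toAdd_eq_two hne _ h0w]
        have e1 : Multiplicative.toAdd w.2 pa = 0 := by omega
        have e2 : Multiplicative.toAdd w.2 qa = 0 := by omega
        rw [e1, e2]
        simp
      · exfalso
        refine hmid v.1 (Multiplicative.toAdd v.2 pa) (Multiplicative.toAdd v.2 qa)
          (by omega) (by omega) ?_ hv0 hvA
        rw [← hvdec]
        exact hvH

end divsec
section divsec3
variable {Fu P : Type*} [CommGroup Fu]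

/-- atom criterion for an element supported on three primes -/
theorem atom_of_three (H : Submonoid (FM Fu P)) {pa qa ra : P}
    (hqp : qa ≠ pa) (hrp : ra ≠ pa) (hrq : ra ≠ qa)
    (z : FM Fu P) (A B C : ℕ) (hAB : 1 ≤ A + B + C)
    (hz2 : Multiplicative.toAdd z.2 =
      Finsupp.single pa A + Finsupp.single qa B + Finsupp.single ra C)
    (hzH : z ∈ H)
    (hmid : ∀ (u : Fu) (i j k : ℕ), i ≤ A → j ≤ B → k ≤ C →
      (((u, 1) : FM Fu P) * primeElt pa ^ i * primeElt qa ^ j * primeElt ra ^ k) ∈ H →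
      ¬(i = 0 ∧ j = 0 ∧ k = 0) → ¬(i = A ∧ j = B ∧ k = C) → False) :
    AtomOf H z := by
  have evalp : Multiplicative.toAdd z.2 pa = A := by
    rw [hz2, Finsupp.add_apply, Finsupp.add_apply, Finsupp.single_eq_same,
      Finsupp.single_eq_of_ne' hqp, Finsupp.single_eq_of_ne' hrp]
    omega
  have evalq : Multiplicative.toAdd z.2 qa = B := by
    rw [hz2, Finsupp.add_apply, Finsupp.add_apply, Finsupp.single_eq_same,
      Finsupp.single_eq_of_ne' (fun h => hqp h.symm), Finsupp.single_eq_of_ne' hrq]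
    omega
  have evalr : Multiplicative.toAdd z.2 ra = C := by
    rw [hz2, Finsupp.add_apply, Finsupp.add_apply, Finsupp.single_eq_same,
      Finsupp.single_eq_of_ne' (fun h => hrp h.symm),
      Finsupp.single_eq_of_ne' (fun h => hrq h.symm)]
    omega
  refine ⟨hzH, ?_, ?_⟩
  · rw [isUnit_iff_toAdd]
    intro h
    rw [h] at evalp evalq evalr
    simp at evalp evalq evalr
    omega
  · intro v w hvH hwH heq
    have hpt := fun x => split_pt (heq.symm) x
    have evz : ∀ x, x ≠ pa → x ≠ qa → x ≠ ra → Multiplicative.toAdd z.2 x = 0 := by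
      intro x hxp hxq hxr
      rw [hz2, Finsupp.add_apply, Finsupp.add_apply,
        Finsupp.single_eq_of_ne' (fun h => hxp h.symm),
        Finsupp.single_eq_of_ne' (fun h => hxq h.symm),
        Finsupp.single_eq_of_ne' (fun h => hxr h.symm)]
      omega
    have h0v : ∀ x, x ≠ pa → x ≠ qa → x ≠ ra → Multiplicative.toAdd v.2 x = 0 := by
      intro x hxp hxq hxr
      have := hpt x
      rw [evz x hxp hxq hxr] at this
      omega
    have h0w : ∀ x, x ≠ pa → x ≠ qa → x ≠ ra → Multiplicative.toAdd w.2 x = 0 := by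
      intro x hxp hxq hxr
      have := hpt x
      rw [evz x hxp hxq hxr] at this
      omega
    have hira : Multiplicative.toAdd v.2 pa + Multiplicative.toAdd w.2 pa = A := by
      have := hpt pa
      rwa [evalp] at this
    have hirb : Multiplicative.toAdd v.2 qa + Multiplicative.toAdd w.2 qa = B := by
      have := hpt qa
      rwa [evalq] at this
    have hirc : Multiplicative.toAdd v.2 ra + Multiplicative.toAdd w.2 ra = C := by
      have := hpt ra
      rwa [evalr] at this
    have hvdec := eq_decomp3 hqp hrp hrq v h0v
    have hwdec := eq_decomp3 hqp hrp hrq w h0w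
    by_cases hv0 : Multiplicative.toAdd v.2 pa = 0 ∧ Multiplicative.toAdd v.2 qa = 0 ∧
        Multiplicative.toAdd v.2 ra = 0
    · left
      rw [isUnit_iff_toAdd]
      rw [toAdd_eq_three hqp hrp hrq _ h0v, hv0.1, hv0.2.1, hv0.2.2]
      simp
    · by_cases hvA : Multiplicative.toAdd v.2 pa = A ∧ Multiplicative.toAdd v.2 qa = B ∧
          Multiplicative.toAdd v.2 ra = C
      · right
        rw [isUnit_iff_toAdd]
        rw [toAdd_eq_three hqp hrp hrq _ h0w]
        have e1 : Multiplicative.toAdd w.2 pa = 0 := by omega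
        have e2 : Multiplicative.toAdd w.2 qa = 0 := by omega
        have e3 : Multiplicative.toAdd w.2 ra = 0 := by omega
        rw [e1, e2, e3]
        simp
      · exfalso
        refine hmid v.1 (Multiplicative.toAdd v.2 pa) (Multiplicative.toAdd v.2 qa)
          (Multiplicative.toAdd v.2 ra) (by omega) (by omega) (by omega) ?_ hv0 hvA
        rw [← hvdec]
        exact hvH

end divsec3
section casesec
variable {Fu P : Type*} [CommGroup Fu]

theorem toAdd_snd_unit_mul (ε : (FM Fu P)ˣ) (t : FM Fu P) :
    Multiplicative.toAdd (((ε : FM Fu P) * t).2) = Multiplicative.toAdd t.2 := by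
  have : ((ε : FM Fu P) * t).2 = (ε : FM Fu P).2 * t.2 := rfl
  rw [this, unit_snd, one_mul]

theorem toAdd_pe_pow (a : P) (n : ℕ) :
    Multiplicative.toAdd ((primeElt a ^ n : FM Fu P)).2 = Finsupp.single a n := by
  rw [pe_pow]
  rfl

theorem not_isUnit_pe_pow (a : P) {n : ℕ} (hn : 1 ≤ n) :
    ¬ IsUnit (primeElt a ^ n : FM Fu P) := by
  intro h
  rw [isUnit_iff_toAdd, toAdd_pe_pow] at h
  have := DFunLike.congr_fun h a
  simp at this
  omega

theorem unit_mul_unit_mul_cancel (ε : (FM Fu P)ˣ) (x : FM Fu P) :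
    ((ε⁻¹ : (FM Fu P)ˣ) : FM Fu P) * ((ε : FM Fu P) * x) = x := by
  rw [← mul_assoc, Units.inv_mul, one_mul]

theorem caseA (H : Submonoid (FM Fu P)) (b : FM Fu P)
    (hfin : CStarFinite H) (hbid : HRel H (b * b) b)
    (hprimes : ∀ y : FM Fu P, NU1 y → ∃ p : P, HRel H y (primeElt p))
    (bmem : ∀ z : FM Fu P, HRel H z b → z ∈ H)
    (hhf : HalfFactorialSub H)
    {X X' : FM Fu P} (hX : NU1 X) (hX' : NU1 X')
    (habX : HRel H (X * b) X) (habX' : HRel H (X' * b) X')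
    (hinv : HRel H (X * X') b)
    {d : ℕ} (hd : 3 ≤ d) (hQd : Qp H b X d)
    (hdvd : ∀ i, 1 ≤ i → Qp H b X i → d ∣ i) : False := by
  obtain ⟨pa, hpX⟩ := hprimes X hX
  obtain ⟨qa, hpX'⟩ := hprimes X' hX'
  have hinv' : HRel H (X' * X) b := by rwa [mul_comm] at hinv
  -- distinctness of the two primes
  have hne : qa ≠ pa := by
    intro h
    subst h
    have hXX' : HRel H X X' := rtrans H hpX (rsymm H hpX')
    have hQ2 : Qp H b X 2 := by
      refine ⟨1, ?_⟩
      rw [Units.val_one, one_mul, pow_two]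
      exact rtrans H (rmul_left H X hXX') hinv
    have := Nat.le_of_dvd (by omega) (hdvd 2 (by omega) hQ2)
    omega
  have habp : HRel H (primeElt pa * b) (primeElt pa) :=
    rtrans H (rmul H (rsymm H hpX) (rrefl H b)) (rtrans H habX hpX)
  have habr : HRel H (primeElt qa * b) (primeElt qa) :=
    rtrans H (rmul H (rsymm H hpX') (rrefl H b)) (rtrans H habX' hpX')
  have hQX'd : Qp H b X' d := Qsym H b hbid habX' hinv' (by omega) hQd
  obtain ⟨ε, hε⟩ := hQd
  obtain ⟨ε', hε'⟩ := hQX'd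
  have hpd : HRel H ((primeElt pa : FM Fu P) ^ d) ((ε : FM Fu P) * b) :=
    rtrans H (rpow H (rsymm H hpX) d) hε
  have hrd : HRel H ((primeElt qa : FM Fu P) ^ d) ((ε' : FM Fu P) * b) :=
    rtrans H (rpow H (rsymm H hpX') d) hε'
  set w : FM Fu P := ((ε⁻¹ : (FM Fu P)ˣ) : FM Fu P) * primeElt pa ^ d with hwdef
  set w' : FM Fu P := ((ε'⁻¹ : (FM Fu P)ˣ) : FM Fu P) * primeElt qa ^ d with hw'def
  set v : FM Fu P := primeElt pa * primeElt qa with hvdef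
  have hwb : HRel H w b := by
    have h1 := rmul_left H ((ε⁻¹ : (FM Fu P)ˣ) : FM Fu P) hpd
    rwa [unit_mul_unit_mul_cancel] at h1
  have hw'b : HRel H w' b := by
    have h1 := rmul_left H ((ε'⁻¹ : (FM Fu P)ˣ) : FM Fu P) hrd
    rwa [unit_mul_unit_mul_cancel] at h1
  have hvb : HRel H v b := rtrans H (rmul H (rsymm H hpX) (rsymm H hpX')) hinv
  have wH : w ∈ H := bmem w hwb
  have w'H : w' ∈ H := bmem w' hw'b
  have vH : v ∈ H := bmem v hvb
  set μ : (FM Fu P)ˣ := ε⁻¹ * ε'⁻¹ with hμdef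
  have hZeq : w * w' = (μ : FM Fu P) * v ^ d := by
    rw [hwdef, hw'def, hvdef, mul_pow, hμdef, Units.val_mul]
    exact mul_mul_mul_comm _ _ _ _
  have hZb : HRel H (w * w') b := by
    refine rtrans H (rmul H hwb hw'b) hbid
  have hZμb : HRel H (w * w') ((μ : FM Fu P) * b) := by
    rw [hZeq]
    refine rmul_left H _ ?_
    exact rtrans H (rpow H hvb d) (bpow H b hbid d (by omega))
  have hμb : HRel H ((μ : FM Fu P) * b) b := rtrans H (rsymm H hZμb) hZb
  have hμvb : HRel H ((μ : FM Fu P) * v) b := rtrans H (rmul_left H _ hvb) hμb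
  have μvH : (μ : FM Fu P) * v ∈ H := bmem _ hμvb
  -- middle divisor contradictions
  have midP : ∀ (u : Fu) (i : ℕ), 1 ≤ i →
      (((u, 1) : FM Fu P) * primeElt pa ^ i) ∈ H → Qp H b X i := by
    intro u i hi hmem
    refine div_unit H b hfin hbid (Z' := X' ^ i) (abs_pow H b habX i hi) ?_ (rpow H (rsymm H hpX) i)
      (not_isUnit_pe_pow pa hi) u hmem
    have h1 := rpow H hinv i
    rw [mul_pow] at h1
    exact rtrans H h1 (bpow H b hbid i hi)
  have midR : ∀ (u : Fu) (j : ℕ), 1 ≤ j →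
      (((u, 1) : FM Fu P) * primeElt qa ^ j) ∈ H → Qp H b X j := by
    intro u j hj hmem
    refine Qsym H b hbid habX hinv (by omega) ?_
    refine div_unit H b hfin hbid (Z' := X ^ j) (abs_pow H b habX' j hj) ?_ (rpow H (rsymm H hpX') j)
      (not_isUnit_pe_pow qa hj) u hmem
    have h1 := rpow H hinv' j
    rw [mul_pow] at h1
    exact rtrans H h1 (bpow H b hbid j hj)
  -- atoms
  have atom_w : AtomOf H w := by
    refine atom_of_two H hne w d 0 (by omega) ?_ wH ?_
    · rw [hwdef, toAdd_snd_unit_mul, toAdd_pe_pow]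
      simp
    · intro u i j hi hj hmem hn0 hnA
      have hj0 : j = 0 := by omega
      subst hj0
      rw [pow_zero, mul_one] at hmem
      have hi1 : 1 ≤ i := by omega
      have := Nat.le_of_dvd (by omega) (hdvd i hi1 (midP u i hi1 hmem))
      omega
  have atom_w' : AtomOf H w' := by
    refine atom_of_two H hne w' 0 d (by omega) ?_ w'H ?_
    · rw [hw'def, toAdd_snd_unit_mul, toAdd_pe_pow]
      simp
    · intro u i j hi hj hmem hn0 hnA
      have hi0 : i = 0 := by omega
      subst hi0
      rw [pow_zero, mul_one] at hmem
      have hj1 : 1 ≤ j := by omega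
      have := Nat.le_of_dvd (by omega) (hdvd j hj1 (midR u j hj1 hmem))
      omega
  have hv2 : Multiplicative.toAdd v.2 = Finsupp.single pa 1 + Finsupp.single qa 1 := by
    rw [hvdef]
    have : (primeElt pa * primeElt qa : FM Fu P).2 = (primeElt pa : FM Fu P).2 * (primeElt qa : FM Fu P).2 := rfl
    rw [this, toAdd_mul]
    rfl
  have midV : ∀ (u : Fu) (i j : ℕ), i ≤ 1 → j ≤ 1 →
      (((u, 1) : FM Fu P) * primeElt pa ^ i * primeElt qa ^ j) ∈ H →
      ¬(i = 0 ∧ j = 0) → ¬(i = 1 ∧ j = 1) → False := by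
    intro u i j hi hj hmem hn0 hnA
    have : (i = 1 ∧ j = 0) ∨ (i = 0 ∧ j = 1) := by omega
    rcases this with ⟨rfl, rfl⟩ | ⟨rfl, rfl⟩
    · rw [pow_zero, mul_one] at hmem
      have := Nat.le_of_dvd (by omega) (hdvd 1 (by omega) (midP u 1 (by omega) hmem))
      omega
    · rw [pow_zero, mul_one] at hmem
      have := Nat.le_of_dvd (by omega) (hdvd 1 (by omega) (midR u 1 (by omega) hmem))
      omega
  have atom_v : AtomOf H v := atom_of_two H hne v 1 1 (by omega) hv2 vH midV
  have atom_μv : AtomOf H ((μ : FM Fu P) * v) := by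
    refine atom_of_two H hne _ 1 1 (by omega) ?_ μvH midV
    rw [toAdd_snd_unit_mul, hv2]
  -- the two factorizations
  set l₁ : List (FM Fu P) := [w, w'] with hl₁
  set l₂ : List (FM Fu P) := ((μ : FM Fu P) * v) :: List.replicate (d - 1) v with hl₂
  have hall₁ : ∀ x ∈ l₁, AtomOf H x := by
    intro x hx
    rw [hl₁] at hx
    simp only [List.mem_cons, List.mem_singleton] at hx
    rcases hx with rfl | hx
    · exact atom_w
    · simp at hx
      rw [hx]
      exact atom_w'
  have hall₂ : ∀ x ∈ l₂, AtomOf H x := by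
    intro x hx
    rw [hl₂] at hx
    simp only [List.mem_cons] at hx
    rcases hx with rfl | hx
    · exact atom_μv
    · have := List.eq_of_mem_replicate hx
      rw [this]
      exact atom_v
  have hprod : l₁.prod = l₂.prod := by
    rw [hl₁, hl₂]
    simp only [List.prod_cons, List.prod_replicate, List.prod_nil, mul_one]
    rw [hZeq, mul_assoc]
    congr 1
    rw [mul_comm v (v ^ (d-1)), ← pow_succ]
    congr 1
    omega
  have hlen := hhf.2 l₁ l₂ hall₁ hall₂ hprod
  rw [hl₁, hl₂] at hlen
  simp only [List.length_cons, List.length_replicate, List.length_nil] at hlen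
  omega

end casesec
section kleinsec
variable {Fu P : Type*} [CommGroup Fu]

theorem abs_mul {M : Type*} [CommMonoid M] (H : Submonoid M) {a b : M}
    (hab : HRel H (a * b) a) (c : M) : HRel H ((a * c) * b) (a * c) := by
  rw [mul_right_comm]
  exact rmul H hab (rrefl H c)

theorem not_isUnit_pe_mul (a c : P) :
    ¬ IsUnit ((primeElt a * primeElt c : FM Fu P)) := by
  intro h
  rw [isUnit_iff_toAdd] at h
  have h2 : Multiplicative.toAdd ((primeElt a * primeElt c : FM Fu P)).2 a = 0 := by
    rw [h]; rfl
  have e : Multiplicative.toAdd ((primeElt a * primeElt c : FM Fu P)).2 =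
      Finsupp.single a 1 + Finsupp.single c 1 := by
    have : (primeElt a * primeElt c : FM Fu P).2 =
        (primeElt a : FM Fu P).2 * (primeElt c : FM Fu P).2 := rfl
    rw [this, toAdd_mul]
    rfl
  rw [e, Finsupp.add_apply, Finsupp.single_eq_same] at h2
  omega

theorem caseKlein (H : Submonoid (FM Fu P)) (b : FM Fu P)
    (hfin : CStarFinite H) (hbid : HRel H (b * b) b)
    (hprimes : ∀ y : FM Fu P, NU1 y → ∃ p : P, HRel H y (primeElt p))
    (bmem : ∀ z : FM Fu P, HRel H z b → z ∈ H)
    (hhf : HalfFactorialSub H)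
    {X X' Y Y' W W' : FM Fu P}
    (hNX : NU1 X) (hNY : NU1 Y) (hNW' : NU1 W')
    (habX : HRel H (X * b) X) (habX' : HRel H (X' * b) X')
    (habY : HRel H (Y * b) Y) (habY' : HRel H (Y' * b) Y')
    (habW : HRel H (W * b) W) (habW' : HRel H (W' * b) W')
    (hinvX : HRel H (X * X') b) (hinvY : HRel H (Y * Y') b) (hinvW : HRel H (W * W') b)
    (hXY : HRel H (X * Y) W) (hXW' : HRel H (X * W') Y') (hYW' : HRel H (Y * W') X')
    (hXYW' : HRel H (X * Y * W') b)
    (hnX : ¬ Qp H b X 1) (hnY : ¬ Qp H b Y 1) (hnW : ¬ Qp H b W 1)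
    (hQX2 : Qp H b X 2) (hQY2 : Qp H b Y 2) (hQW2 : Qp H b W 2) : False := by
  obtain ⟨pa, hpX⟩ := hprimes X hNX
  obtain ⟨qa, hpY⟩ := hprimes Y hNY
  obtain ⟨sa, hpS⟩ := hprimes W' hNW'
  have hinvW' : HRel H (W' * W) b := by rwa [mul_comm] at hinvW
  have hinvX' : HRel H (X' * X) b := by rwa [mul_comm] at hinvX
  have hinvY' : HRel H (Y' * Y) b := by rwa [mul_comm] at hinvY
  have hnW' : ¬ Qp H b W' 1 := fun hq => hnW (Qsym H b hbid habW hinvW (le_refl 1) hq)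
  have hnX' : ¬ Qp H b X' 1 := fun hq => hnX (Qsym H b hbid habX hinvX (le_refl 1) hq)
  have hnY' : ¬ Qp H b Y' 1 := fun hq => hnY (Qsym H b hbid habY hinvY (le_refl 1) hq)
  have hQW'2 : Qp H b W' 2 := Qsym H b hbid habW' hinvW' (by omega) hQW2
  obtain ⟨ε₁, hε₁⟩ := hQX2
  obtain ⟨ε₂, hε₂⟩ := hQY2
  obtain ⟨ε₃, hε₃⟩ := hQW'2
  -- distinctness
  have hqp : qa ≠ pa := by
    intro h
    subst h
    apply hnW
    have hXtoY : HRel H X Y := rtrans H hpX (rsymm H hpY)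
    refine ⟨ε₂, ?_⟩
    rw [pow_one]
    refine rtrans H (rsymm H hXY) ?_
    refine rtrans H (rmul H hXtoY (rrefl H Y)) ?_
    rw [← pow_two]
    exact hε₂
  have hsp : sa ≠ pa := by
    intro h
    subst h
    apply hnY
    have hXtoW' : HRel H X W' := rtrans H hpX (rsymm H hpS)
    -- X*Y*X ~ W*X ~ W*W' ~ b ; X*Y*X = X^2*Y ~ ε₁ b Y
    have h1 : HRel H (X * Y * X) b := by
      refine rtrans H (rmul H hXY (rrefl H X)) ?_
      refine rtrans H (rmul_left H W hXtoW') hinvW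
    have e1 : X * Y * X = X ^ 2 * Y := by
      rw [pow_two, mul_right_comm]
    rw [e1] at h1
    have h2 : HRel H ((ε₁ : FM Fu P) * (b * Y)) b := by
      refine rtrans H ?_ h1
      rw [← mul_assoc]
      exact rmul H (rsymm H hε₁) (rrefl H Y)
    have h3 := runit_cancel H ε₁ h2
    refine ⟨ε₁⁻¹, ?_⟩
    rw [pow_one]
    refine rtrans H ?_ h3
    refine rtrans H (rsymm H habY) ?_
    rw [mul_comm]
    exact rrefl H _
  have hsq : sa ≠ qa := by
    intro h
    subst h
    apply hnX
    have hYtoW' : HRel H Y W' := rtrans H hpY (rsymm H hpS)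
    have h1 : HRel H (X * Y * Y) b := by
      refine rtrans H (rmul H hXY (rrefl H Y)) ?_
      refine rtrans H (rmul_left H W hYtoW') hinvW
    have e1 : X * Y * Y = Y ^ 2 * X := by
      rw [pow_two, mul_comm X Y, mul_right_comm]
    rw [e1] at h1
    have h2 : HRel H ((ε₂ : FM Fu P) * (b * X)) b := by
      refine rtrans H ?_ h1
      rw [← mul_assoc]
      exact rmul H (rsymm H hε₂) (rrefl H X)
    have h3 := runit_cancel H ε₂ h2
    refine ⟨ε₂⁻¹, ?_⟩
    rw [pow_one]
    refine rtrans H ?_ h3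
    refine rtrans H (rsymm H habX) ?_
    rw [mul_comm]
    exact rrefl H _
  -- prime absorbed relations
  have hpd2 : HRel H ((primeElt pa : FM Fu P) ^ 2) ((ε₁ : FM Fu P) * b) :=
    rtrans H (rpow H (rsymm H hpX) 2) hε₁
  have hqd2 : HRel H ((primeElt qa : FM Fu P) ^ 2) ((ε₂ : FM Fu P) * b) :=
    rtrans H (rpow H (rsymm H hpY) 2) hε₂
  have hsd2 : HRel H ((primeElt sa : FM Fu P) ^ 2) ((ε₃ : FM Fu P) * b) :=
    rtrans H (rpow H (rsymm H hpS) 2) hε₃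
  set A : FM Fu P := ((ε₁⁻¹ : (FM Fu P)ˣ) : FM Fu P) * primeElt pa ^ 2 with hAdef
  set B : FM Fu P := ((ε₂⁻¹ : (FM Fu P)ˣ) : FM Fu P) * primeElt qa ^ 2 with hBdef
  set C : FM Fu P := ((ε₃⁻¹ : (FM Fu P)ˣ) : FM Fu P) * primeElt sa ^ 2 with hCdef
  set D : FM Fu P := primeElt pa * primeElt qa * primeElt sa with hDdef
  have hAb : HRel H A b := by
    have h1 := rmul_left H ((ε₁⁻¹ : (FM Fu P)ˣ) : FM Fu P) hpd2
    rwa [unit_mul_unit_mul_cancel] at h1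
  have hBb : HRel H B b := by
    have h1 := rmul_left H ((ε₂⁻¹ : (FM Fu P)ˣ) : FM Fu P) hqd2
    rwa [unit_mul_unit_mul_cancel] at h1
  have hCb : HRel H C b := by
    have h1 := rmul_left H ((ε₃⁻¹ : (FM Fu P)ˣ) : FM Fu P) hsd2
    rwa [unit_mul_unit_mul_cancel] at h1
  have hDb : HRel H D b :=
    rtrans H (rmul H (rmul H (rsymm H hpX) (rsymm H hpY)) (rsymm H hpS)) hXYW'
  have AH : A ∈ H := bmem A hAb
  have BH : B ∈ H := bmem B hBb
  have CH : C ∈ H := bmem C hCb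
  have DH : D ∈ H := bmem D hDb
  -- middle divisor contradictions
  have midX : ∀ (u : Fu) (i : ℕ), 1 ≤ i →
      (((u, 1) : FM Fu P) * primeElt pa ^ i) ∈ H → Qp H b X i := by
    intro u i hi hmem
    refine div_unit H b hfin hbid (Z' := X' ^ i) (abs_pow H b habX i hi) ?_
      (rpow H (rsymm H hpX) i) (not_isUnit_pe_pow pa hi) u hmem
    have h1 := rpow H hinvX i
    rw [mul_pow] at h1
    exact rtrans H h1 (bpow H b hbid i hi)
  have midY : ∀ (u : Fu) (i : ℕ), 1 ≤ i →
      (((u, 1) : FM Fu P) * primeElt qa ^ i) ∈ H → Qp H b Y i := by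
    intro u i hi hmem
    refine div_unit H b hfin hbid (Z' := Y' ^ i) (abs_pow H b habY i hi) ?_
      (rpow H (rsymm H hpY) i) (not_isUnit_pe_pow qa hi) u hmem
    have h1 := rpow H hinvY i
    rw [mul_pow] at h1
    exact rtrans H h1 (bpow H b hbid i hi)
  have midS : ∀ (u : Fu) (i : ℕ), 1 ≤ i →
      (((u, 1) : FM Fu P) * primeElt sa ^ i) ∈ H → Qp H b W' i := by
    intro u i hi hmem
    refine div_unit H b hfin hbid (Z' := W ^ i) (abs_pow H b habW' i hi) ?_
      (rpow H (rsymm H hpS) i) (not_isUnit_pe_pow sa hi) u hmem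
    have h1 := rpow H hinvW' i
    rw [mul_pow] at h1
    exact rtrans H h1 (bpow H b hbid i hi)
  have midXY : ∀ (u : Fu),
      (((u, 1) : FM Fu P) * (primeElt pa * primeElt qa)) ∈ H → False := by
    intro u hmem
    have h := div_unit H b hfin hbid (Z := X * Y) (Z' := W') (abs_mul H habX Y)
      hXYW' (rmul H (rsymm H hpX) (rsymm H hpY)) (not_isUnit_pe_mul pa qa) u hmem
    obtain ⟨ε, hε⟩ := h
    exact hnW ⟨ε, by rw [pow_one]; exact rtrans H (rsymm H hXY) hε⟩
  have midXS : ∀ (u : Fu),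
      (((u, 1) : FM Fu P) * (primeElt pa * primeElt sa)) ∈ H → False := by
    intro u hmem
    have hinvZ : HRel H ((X * W') * Y) b := by
      rw [mul_right_comm]
      exact hXYW'
    have h := div_unit H b hfin hbid (Z := X * W') (Z' := Y) (abs_mul H habX W')
      hinvZ (rmul H (rsymm H hpX) (rsymm H hpS)) (not_isUnit_pe_mul pa sa) u hmem
    obtain ⟨ε, hε⟩ := h
    exact hnY' ⟨ε, by rw [pow_one]; exact rtrans H (rsymm H hXW') hε⟩
  have midYS : ∀ (u : Fu),
      (((u, 1) : FM Fu P) * (primeElt qa * primeElt sa)) ∈ H → False := by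
    intro u hmem
    have hinvZ : HRel H ((Y * W') * X) b := by
      rw [mul_comm, ← mul_assoc]
      exact hXYW'
    have h := div_unit H b hfin hbid (Z := Y * W') (Z' := X) (abs_mul H habY W')
      hinvZ (rmul H (rsymm H hpY) (rsymm H hpS)) (not_isUnit_pe_mul qa sa) u hmem
    obtain ⟨ε, hε⟩ := h
    exact hnX' ⟨ε, by rw [pow_one]; exact rtrans H (rsymm H hYW') hε⟩
  -- atoms
  have atomA : AtomOf H A := by
    refine atom_of_two H hqp A 2 0 (by omega) ?_ AH ?_
    · rw [hAdef, toAdd_snd_unit_mul, toAdd_pe_pow]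
      simp
    · intro u i j hi hj hmem hn0 hnA
      have hj0 : j = 0 := by omega
      have hi1 : i = 1 := by omega
      subst hj0; subst hi1
      rw [pow_zero, mul_one, pow_one] at hmem
      exact hnX (midX u 1 (by omega) (by rwa [pow_one]))
  have atomB : AtomOf H B := by
    refine atom_of_two H hqp B 0 2 (by omega) ?_ BH ?_
    · rw [hBdef, toAdd_snd_unit_mul, toAdd_pe_pow]
      simp
    · intro u i j hi hj hmem hn0 hnA
      have hi0 : i = 0 := by omega
      have hj1 : j = 1 := by omega
      subst hi0; subst hj1
      rw [pow_zero, mul_one, pow_one] at hmem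
      exact hnY (midY u 1 (by omega) (by rwa [pow_one]))
  have atomC : AtomOf H C := by
    refine atom_of_two H hsp C 0 2 (by omega) ?_ CH ?_
    · rw [hCdef, toAdd_snd_unit_mul, toAdd_pe_pow]
      simp
    · intro u i j hi hj hmem hn0 hnA
      have hi0 : i = 0 := by omega
      have hj1 : j = 1 := by omega
      subst hi0; subst hj1
      rw [pow_zero, mul_one, pow_one] at hmem
      exact hnW' (midS u 1 (by omega) (by rwa [pow_one]))
  have hD2 : Multiplicative.toAdd D.2 =
      Finsupp.single pa 1 + Finsupp.single qa 1 + Finsupp.single sa 1 := by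
    have e : D.2 = (primeElt pa : FM Fu P).2 * (primeElt qa : FM Fu P).2 *
        (primeElt sa : FM Fu P).2 := rfl
    rw [e, toAdd_mul, toAdd_mul]
    rfl
  have midD : ∀ (u : Fu) (i j k : ℕ), i ≤ 1 → j ≤ 1 → k ≤ 1 →
      (((u, 1) : FM Fu P) * primeElt pa ^ i * primeElt qa ^ j * primeElt sa ^ k) ∈ H →
      ¬(i = 0 ∧ j = 0 ∧ k = 0) → ¬(i = 1 ∧ j = 1 ∧ k = 1) → False := by
    intro u i j k hi hj hk hmem hn0 hnA
    have hc : (i = 1 ∧ j = 0 ∧ k = 0) ∨ (i = 0 ∧ j = 1 ∧ k = 0) ∨ (i = 0 ∧ j = 0 ∧ k = 1) ∨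
        (i = 1 ∧ j = 1 ∧ k = 0) ∨ (i = 1 ∧ j = 0 ∧ k = 1) ∨ (i = 0 ∧ j = 1 ∧ k = 1) := by
      omega
    rcases hc with ⟨rfl, rfl, rfl⟩ | ⟨rfl, rfl, rfl⟩ | ⟨rfl, rfl, rfl⟩ | ⟨rfl, rfl, rfl⟩ |
      ⟨rfl, rfl, rfl⟩ | ⟨rfl, rfl, rfl⟩
    · simp only [pow_zero, pow_one, mul_one] at hmem
      exact hnX (midX u 1 (by omega) (by rwa [pow_one]))
    · simp only [pow_zero, pow_one, mul_one] at hmem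
      exact hnY (midY u 1 (by omega) (by rwa [pow_one]))
    · simp only [pow_zero, pow_one, mul_one] at hmem
      exact hnW' (midS u 1 (by omega) (by rwa [pow_one]))
    · simp only [pow_zero, pow_one, mul_one] at hmem
      rw [mul_assoc] at hmem
      exact midXY u hmem
    · simp only [pow_zero, pow_one, mul_one] at hmem
      rw [mul_assoc] at hmem
      exact midXS u hmem
    · simp only [pow_zero, pow_one, mul_one] at hmem
      rw [mul_assoc] at hmem
      exact midYS u hmem
  have atomD : AtomOf H D := atom_of_three H hqp hsp hsq D 1 1 1 (by omega) hD2 DH midD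
  set μ : (FM Fu P)ˣ := ε₁⁻¹ * ε₂⁻¹ * ε₃⁻¹ with hμdef
  have hZeq : A * B * C = (μ : FM Fu P) * D ^ 2 := by
    rw [hAdef, hBdef, hCdef, hDdef, mul_pow, mul_pow, hμdef, Units.val_mul, Units.val_mul]
    rw [mul_mul_mul_comm ((ε₁⁻¹ : (FM Fu P)ˣ) : FM Fu P) (primeElt pa ^ 2)
      ((ε₂⁻¹ : (FM Fu P)ˣ) : FM Fu P) (primeElt qa ^ 2)]
    exact mul_mul_mul_comm _ _ _ _
  have hZb : HRel H (A * B * C) b :=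
    rtrans H (rmul H (rtrans H (rmul H hAb hBb) hbid) hCb) hbid
  have hZμb : HRel H (A * B * C) ((μ : FM Fu P) * b) := by
    rw [hZeq]
    exact rmul_left H _ (rtrans H (rpow H hDb 2) (bpow H b hbid 2 (by omega)))
  have hμb : HRel H ((μ : FM Fu P) * b) b := rtrans H (rsymm H hZμb) hZb
  have hμDb : HRel H ((μ : FM Fu P) * D) b := rtrans H (rmul_left H _ hDb) hμb
  have μDH : (μ : FM Fu P) * D ∈ H := bmem _ hμDb
  have atomμD : AtomOf H ((μ : FM Fu P) * D) := by
    refine atom_of_three H hqp hsp hsq _ 1 1 1 (by omega) ?_ μDH midD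
    rw [toAdd_snd_unit_mul, hD2]
  -- two factorizations
  have hall₁ : ∀ x ∈ [A, B, C], AtomOf H x := by
    intro x hx
    simp only [List.mem_cons, List.not_mem_nil, or_false] at hx
    rcases hx with rfl | rfl | rfl
    · exact atomA
    · exact atomB
    · exact atomC
  have hall₂ : ∀ x ∈ [(μ : FM Fu P) * D, D], AtomOf H x := by
    intro x hx
    simp only [List.mem_cons, List.not_mem_nil, or_false] at hx
    rcases hx with rfl | rfl
    · exact atomμD
    · exact atomD
  have hprod : ([A, B, C] : List (FM Fu P)).prod = ([(μ : FM Fu P) * D, D] : List (FM Fu P)).prod := by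
    simp only [List.prod_cons, List.prod_nil, mul_one]
    rw [← mul_assoc, hZeq, mul_assoc]
    congr 1
    rw [pow_two]
  have hlen := hhf.2 _ _ hall₁ hall₂ hprod
  simp at hlen

end kleinsec
section mainsec
variable {Fu P : Type*} [CommGroup Fu]

theorem swap4 {M : Type*} [CommMonoid M] (a x c y : M) :
    (a * x) * (c * y) = (a * y) * (c * x) := by
  rw [mul_mul_mul_comm, mul_mul_mul_comm a y c x, mul_comm x y]

/-- from `Qp (aᵢ * zⱼ) 1` conclude `aᵢ ~ ε * aⱼ` -/
theorem Q1_to_unit (H : Submonoid (FM Fu P)) (b : FM Fu P)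
    {ai aj zj : FM Fu P} (habi : HRel H (ai * b) ai) (habj : HRel H (aj * b) aj)
    (hinvj : HRel H (aj * zj) b) (ε : (FM Fu P)ˣ)
    (hQ : HRel H (ai * zj) ((ε : FM Fu P) * b)) :
    HRel H ai ((ε : FM Fu P) * aj) := by
  refine rtrans H (rsymm H habi) ?_
  refine rtrans H (rmul_left H ai (rsymm H hinvj)) ?_
  have e : ai * (aj * zj) = (ai * zj) * aj := by
    rw [mul_comm aj zj, ← mul_assoc]
  rw [e]
  refine rtrans H (rmul H hQ (rrefl H aj)) ?_
  rw [mul_assoc]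
  refine rmul_left H _ ?_
  rw [mul_comm]
  exact habj

theorem main_contradiction (H : Submonoid (FM Fu P))
    (hfin : CStarFinite H) (hdense : DenseSub H)
    (hprimes : ∀ y : FM Fu P, NU1 y → ∃ p : P, HRel H y (primeElt p))
    (b : FM Fu P) (hb : NU1 b) (hbid : HRel H (b * b) b)
    (hbmin : ∀ c : FM Fu P, NU1 c → HRel H (c * c) c → HRel H (b * c) b)
    (hhf : HalfFactorialSub H)
    {a₁ a₂ a₃ z₁ z₂ z₃ : FM Fu P}
    (hN₁ : NU1 a₁) (hN₂ : NU1 a₂) (hN₃ : NU1 a₃)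
    (hNz₁ : NU1 z₁) (hNz₂ : NU1 z₂) (hNz₃ : NU1 z₃)
    (hab₁ : HRel H (a₁ * b) a₁) (hab₂ : HRel H (a₂ * b) a₂) (hab₃ : HRel H (a₃ * b) a₃)
    (hinv₁ : HRel H (a₁ * z₁) b) (hinv₂ : HRel H (a₂ * z₂) b) (hinv₃ : HRel H (a₃ * z₃) b)
    (hc₁₂ : ∀ ε : (FM Fu P)ˣ, ¬ HRel H a₁ ((ε : FM Fu P) * a₂))
    (hc₁₃ : ∀ ε : (FM Fu P)ˣ, ¬ HRel H a₁ ((ε : FM Fu P) * a₃))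
    (hc₂₃ : ∀ ε : (FM Fu P)ˣ, ¬ HRel H a₂ ((ε : FM Fu P) * a₃)) : False := by
  -- the class of b contains an element of H
  obtain ⟨w₀, hw₀H, hw₀b⟩ := exists_bmem H b hfin hdense hprimes hb hbid hbmin
  have bmem : ∀ z : FM Fu P, HRel H z b → z ∈ H := by
    intro z hz
    exact (rmem H (rtrans H hz (rsymm H hw₀b))).mpr hw₀H
  set X : FM Fu P := a₁ * z₂ with hXdef
  set X' : FM Fu P := a₂ * z₁ with hX'def
  set Y : FM Fu P := a₂ * z₃ with hYdef
  set Y' : FM Fu P := a₃ * z₂ with hY'def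
  set W : FM Fu P := a₁ * z₃ with hWdef
  set W' : FM Fu P := a₃ * z₁ with hW'def
  have hNX : NU1 X := nu1_mul hN₁ hNz₂
  have hNX' : NU1 X' := nu1_mul hN₂ hNz₁
  have hNY : NU1 Y := nu1_mul hN₂ hNz₃
  have hNY' : NU1 Y' := nu1_mul hN₃ hNz₂
  have hNW : NU1 W := nu1_mul hN₁ hNz₃
  have hNW' : NU1 W' := nu1_mul hN₃ hNz₁
  have habX : HRel H (X * b) X := abs_mul H hab₁ z₂
  have habX' : HRel H (X' * b) X' := abs_mul H hab₂ z₁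
  have habY : HRel H (Y * b) Y := abs_mul H hab₂ z₃
  have habY' : HRel H (Y' * b) Y' := abs_mul H hab₃ z₂
  have habW : HRel H (W * b) W := abs_mul H hab₁ z₃
  have habW' : HRel H (W' * b) W' := abs_mul H hab₃ z₁
  have hinvX : HRel H (X * X') b := by
    rw [hXdef, hX'def, swap4]
    exact rtrans H (rmul H hinv₁ hinv₂) hbid
  have hinvY : HRel H (Y * Y') b := by
    rw [hYdef, hY'def, swap4]
    exact rtrans H (rmul H hinv₂ hinv₃) hbid
  have hinvW : HRel H (W * W') b := by
    rw [hWdef, hW'def, swap4]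
    exact rtrans H (rmul H hinv₁ hinv₃) hbid
  have hXY : HRel H (X * Y) W := by
    rw [hXdef, hYdef, swap4, ← hWdef]
    exact rtrans H (rmul_left H W hinv₂) habW
  have hXW' : HRel H (X * W') Y' := by
    rw [hXdef, hW'def, swap4, ← hY'def]
    have e : (a₁ * z₁) * Y' = Y' * (a₁ * z₁) := mul_comm _ _
    rw [e]
    exact rtrans H (rmul_left H Y' hinv₁) habY'
  have hYW' : HRel H (Y * W') X' := by
    rw [hYdef, hW'def, swap4, ← hX'def]
    exact rtrans H (rmul_left H X' hinv₃) habX'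
  have hXYW' : HRel H (X * Y * W') b :=
    rtrans H (rmul H hXY (rrefl H W')) hinvW
  -- ¬ Qp 1 facts
  have hnX : ¬ Qp H b X 1 := by
    rintro ⟨ε, hQ⟩
    rw [pow_one] at hQ
    exact hc₁₂ ε (Q1_to_unit H b hab₁ hab₂ hinv₂ ε hQ)
  have hnY : ¬ Qp H b Y 1 := by
    rintro ⟨ε, hQ⟩
    rw [pow_one] at hQ
    exact hc₂₃ ε (Q1_to_unit H b hab₂ hab₃ hinv₃ ε hQ)
  have hnW : ¬ Qp H b W 1 := by
    rintro ⟨ε, hQ⟩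
    rw [pow_one] at hQ
    exact hc₁₃ ε (Q1_to_unit H b hab₁ hab₃ hinv₃ ε hQ)
  -- orders
  obtain ⟨dX, hdX1, hQdX, hdvdX⟩ := exists_ord H b hfin hbid hNX habX hinvX
  obtain ⟨dY, hdY1, hQdY, hdvdY⟩ := exists_ord H b hfin hbid hNY habY hinvY
  obtain ⟨dW, hdW1, hQdW, hdvdW⟩ := exists_ord H b hfin hbid hNW habW hinvW
  have hdX2 : 2 ≤ dX := by
    rcases Nat.lt_or_ge dX 2 with h | h
    · exfalso
      have he : dX = 1 := by omega
      rw [he] at hQdX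
      exact hnX hQdX
    · exact h
  have hdY2 : 2 ≤ dY := by
    rcases Nat.lt_or_ge dY 2 with h | h
    · exfalso
      have he : dY = 1 := by omega
      rw [he] at hQdY
      exact hnY hQdY
    · exact h
  have hdW2 : 2 ≤ dW := by
    rcases Nat.lt_or_ge dW 2 with h | h
    · exfalso
      have he : dW = 1 := by omega
      rw [he] at hQdW
      exact hnW hQdW
    · exact h
  by_cases h3X : 3 ≤ dX
  · exact caseA H b hfin hbid hprimes bmem hhf hNX hNX' habX habX' hinvX h3X hQdX hdvdX
  by_cases h3Y : 3 ≤ dY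
  · exact caseA H b hfin hbid hprimes bmem hhf hNY hNY' habY habY' hinvY h3Y hQdY hdvdY
  by_cases h3W : 3 ≤ dW
  · exact caseA H b hfin hbid hprimes bmem hhf hNW hNW' habW habW' hinvW h3W hQdW hdvdW
  -- Klein case
  have heX : dX = 2 := by omega
  have heY : dY = 2 := by omega
  have heW : dW = 2 := by omega
  rw [heX] at hQdX
  rw [heY] at hQdY
  rw [heW] at hQdW
  exact caseKlein H b hfin hbid hprimes bmem hhf hNX hNY hNW' habX habX' habY habY'
    habW habW' hinvX hinvY hinvW hXY hXW' hYW' hXYW' hnX hnY hnW hQdX hQdY hQdW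

end mainsec

end Stmt17Aux

/-- Let `H ⊆ F` be a dense seminormal C-monoid such that every class of
`C*(H,F)` contains a prime of `F`, and let `b` represent the smallest
idempotent `eₙ = e₀ + ... + eₙ` of `C*(H,F)`.  If `H` is half-factorial, then
the quotient group `Cₙ*/φₙ(C_{F^×}(H,F))` has at most two elements, where
`Cₙ*` is the constituent group of `eₙ` and `φₙ([ε]) = [ε] + eₙ`: among any
three elements `[a₁], [a₂], [a₃]` of `Cₙ*`, two differ by the class of a unit
`ε ∈ F^×` (note `[ε] + [a] = [ε] + eₙ + [a]` for `[a] ∈ Cₙ*`). -/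
theorem stmt_17 {Fu P : Type*} [CommGroup Fu] (H : Submonoid (FM Fu P))
    (hux : UnitsCond H) (hfin : CStarFinite H) (hsn : SeminormalSub H)
    (hdense : DenseSub H)
    (hprimes : ∀ y : FM Fu P, NU1 y → ∃ p : P, HRel H y (primeElt p))
    (b : FM Fu P) (hb : NU1 b) (hbid : HRel H (b * b) b)
    (hbmin : ∀ c : FM Fu P, NU1 c → HRel H (c * c) c → HRel H (b * c) b)
    (hhf : HalfFactorialSub H) :
    ∀ a₁ a₂ a₃ : FM Fu P,
      (NU1 a₁ ∧ HRel H (a₁ * b) a₁ ∧ ∃ z, NU1 z ∧ HRel H (a₁ * z) b) →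
      (NU1 a₂ ∧ HRel H (a₂ * b) a₂ ∧ ∃ z, NU1 z ∧ HRel H (a₂ * z) b) →
      (NU1 a₃ ∧ HRel H (a₃ * b) a₃ ∧ ∃ z, NU1 z ∧ HRel H (a₃ * z) b) →
      (∃ ε : (FM Fu P)ˣ, HRel H a₁ ((ε : FM Fu P) * a₂)) ∨
      (∃ ε : (FM Fu P)ˣ, HRel H a₁ ((ε : FM Fu P) * a₃)) ∨
      (∃ ε : (FM Fu P)ˣ, HRel H a₂ ((ε : FM Fu P) * a₃)) := by
  intro a₁ a₂ a₃ h₁ h₂ h₃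
  by_contra hcon
  push_neg at hcon
  obtain ⟨hc₁₂, hc₁₃, hc₂₃⟩ := hcon
  obtain ⟨hN₁, hab₁, z₁, hNz₁, hinv₁⟩ := h₁
  obtain ⟨hN₂, hab₂, z₂, hNz₂, hinv₂⟩ := h₂
  obtain ⟨hN₃, hab₃, z₃, hNz₃, hinv₃⟩ := h₃
  exact Stmt17Aux.main_contradiction H hfin hdense hprimes b hb hbid hbmin hhf
    hN₁ hN₂ hN₃ hNz₁ hNz₂ hNz₃ hab₁ hab₂ hab₃ hinv₁ hinv₂ hinv₃ hc₁₂ hc₁₃ hc₂₃
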